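/- The function f̃₁⁽⁰⁾(v) = C·v^{−2(1+γ/2)}·exp(−(M̄/ρ̄)·γ/v) on (0,∞), with γ = B/D, B = 2ω₁ + ω₂(1+α), D = ζ²(3+α)/2, is a stationary solution of the Fokker–Planck equation ∂_τ f = −(β₁²/(1+α)) ∂_v[((ω₁M̄ − ω₂vρ̄) + α(ω₂M̄ − ω₂vρ̄) + (ω₁M̄ − ω₁vρ̄) + (ω₂M̄ − ω₁vρ̄)) f] + (ζ²β₁²ρ̄(3+α)/(2(1+α))) ∂²_{vv}(v² f), i.e. the right-hand side vanishes identically on (0,∞) when f = f̃₁⁽⁰⁾. -/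

import Mathlib

/-- Pure algebra behind the stationarity identity. -/
lemma stmt_13_key (b α ζ M ρ B D γ k p A2 v : ℝ)
    (hα : 0 < α) (hρ : ρ ≠ 0) (hDne : D ≠ 0) (h1α : (1:ℝ) + α ≠ 0)
    (hD : D = ζ ^ 2 * (3 + α) / 2) (hB : B = γ * D) (hk : k = M / ρ * γ)
    (hp : p = -(2 + γ)) :
    -(b / (1 + α)) * (B * M * (p * (v * A2) + k * A2)
        - B * ρ * ((p + 1) * (v * (v * A2)) + k * (v * A2)))
      + (ζ ^ 2 * b * ρ / (2 * (1 + α)))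
          * ((3 + α) * ((p + 2) * ((p + 1) * (v * (v * A2)) + k * (v * A2))
              + k * (p * (v * A2) + k * A2))) = 0 := by
  subst hB hk hp hD
  field_simp
  ring

/-- The profile `f̃₁⁽⁰⁾(v) = C v^{-2(1+γ/2)} exp(-(M̄/ρ̄)γ/v)` is a stationary
solution of the Fokker–Planck equation (without the reaction term): the
right-hand side vanishes pointwise on `(0,∞)`. -/
theorem stmt_13 (ω1 ω2 ζ α b12 Mbar ρbar C : ℝ)
    (hω1 : ω1 ∈ Set.Icc (0:ℝ) 1) (hω2 : ω2 ∈ Set.Icc (0:ℝ) 1)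
    (hζ : 0 < ζ) (hα : 0 < α) (hb : 0 < b12) (hM : 0 < Mbar) (hρ : 0 < ρbar) (hC : 0 < C)
    (B D γ : ℝ)
    (hB : B = 2 * ω1 + ω2 * (1 + α)) (hD : D = ζ ^ 2 * (3 + α) / 2) (hγ : γ = B / D)
    (hγpos : 0 < γ)
    (f : ℝ → ℝ)
    (hf : ∀ v > (0:ℝ), f v = C * v ^ (-(2 * (1 + γ / 2))) * Real.exp (-(Mbar / ρbar) * γ / v)) :
    ∀ v > (0:ℝ),
      -(b12 / (1 + α)) * deriv (fun u =>
          ((ω1 * Mbar - ω2 * u * ρbar) + α * (ω2 * Mbar - ω2 * u * ρbar)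
            + (ω1 * Mbar - ω1 * u * ρbar) + (ω2 * Mbar - ω1 * u * ρbar)) * f u) v
        + (ζ ^ 2 * b12 * ρbar / (2 * (1 + α)))
            * deriv (deriv (fun u => u ^ 2 * (3 + α) * f u)) v = 0 := by
  intro v hv
  have h1α : (0:ℝ) < 1 + α := by linarith
  have hDpos : 0 < D := by rw [hD]; positivity
  set k : ℝ := Mbar / ρbar * γ with hk
  set p : ℝ := -(2 + γ) with hp
  have hpeq : -(2 * (1 + γ / 2)) = p := by rw [hp]; ring
  set ψ : ℝ → ℝ → ℝ :=
    fun q u => C * u ^ q * Real.exp (-(Mbar / ρbar) * γ / u) with hψ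
  -- f agrees with ψ p on (0, ∞)
  have hfψ : ∀ u > (0:ℝ), f u = ψ p u := by
    intro u hu
    rw [hf u hu, hψ, ← hpeq]
  -- derivative of ψ q
  have hder : ∀ (q : ℝ), ∀ u > (0:ℝ),
      HasDerivAt (ψ q) (q * ψ (q - 1) u + k * ψ (q - 2) u) u := by
    intro q u hu
    have h1 : HasDerivAt (fun x : ℝ => C * x ^ q) (C * (q * u ^ (q - 1))) u :=
      (Real.hasDerivAt_rpow_const (Or.inl hu.ne')).const_mul C
    have h2 : HasDerivAt (fun x : ℝ => -(Mbar / ρbar) * γ / x) (k / u ^ 2) u := by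
      have h := (hasDerivAt_inv hu.ne').const_mul (-(Mbar / ρbar) * γ)
      have : -(Mbar / ρbar) * γ * -(u ^ 2)⁻¹ = k / u ^ 2 := by
        rw [hk]; field_simp
      rw [this] at h
      simpa only [div_eq_mul_inv] using h
    have h3 := h1.mul h2.exp
    refine h3.congr_deriv ?_
    have e1 : u ^ (q - 1) = u ^ q / u := by
      rw [Real.rpow_sub hu, Real.rpow_one]
    have e2 : u ^ (q - 2) = u ^ q / u ^ 2 := by
      rw [Real.rpow_sub hu, Real.rpow_two]
    rw [hψ]
    simp only [e1, e2]
    have hu' : u ≠ 0 := hu.ne'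
    field_simp
  have hmem : Set.Ioi (0:ℝ) ∈ nhds v := isOpen_Ioi.mem_nhds hv
  -- first deriv: drift term
  have hd1 : deriv (fun u =>
      ((ω1 * Mbar - ω2 * u * ρbar) + α * (ω2 * Mbar - ω2 * u * ρbar)
        + (ω1 * Mbar - ω1 * u * ρbar) + (ω2 * Mbar - ω1 * u * ρbar)) * f u) v
      = B * Mbar * (p * ψ (p - 1) v + k * ψ (p - 2) v)
        - B * ρbar * ((p + 1) * ψ p v + k * ψ (p - 1) v) := by
    have heq : (fun u =>
        ((ω1 * Mbar - ω2 * u * ρbar) + α * (ω2 * Mbar - ω2 * u * ρbar)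
          + (ω1 * Mbar - ω1 * u * ρbar) + (ω2 * Mbar - ω1 * u * ρbar)) * f u)
        =ᶠ[nhds v] (fun u => B * Mbar * ψ p u - B * ρbar * ψ (p + 1) u) := by
      filter_upwards [hmem] with u hu
      have h1 : ψ (p + 1) u = u * ψ p u := by
        rw [hψ]; simp only
        rw [Real.rpow_add_one hu.ne']
        ring
      rw [hfψ u hu, h1, hB]
      ring
    rw [heq.deriv_eq]
    have hD1 := ((hder p v hv).const_mul (B * Mbar)).sub
      ((hder (p + 1) v hv).const_mul (B * ρbar))
    have : p + 1 - 1 = p := by ring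
    rw [this] at hD1
    have : p + 1 - 2 = p - 1 := by ring
    rw [this] at hD1
    exact hD1.deriv
  -- second deriv term
  have hφ : ∀ u > (0:ℝ), deriv (fun x => x ^ 2 * (3 + α) * f x) u
      = (3 + α) * ((p + 2) * ψ (p + 1) u + k * ψ p u) := by
    intro u hu
    have hmem' : Set.Ioi (0:ℝ) ∈ nhds u := isOpen_Ioi.mem_nhds hu
    have heq : (fun x => x ^ 2 * (3 + α) * f x)
        =ᶠ[nhds u] (fun x => (3 + α) * ψ (p + 2) x) := by
      filter_upwards [hmem'] with x hx
      have h1 : ψ (p + 2) x = x ^ 2 * ψ p x := by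
        rw [hψ]; simp only
        rw [show p + 2 = p + 1 + 1 by ring, Real.rpow_add_one hx.ne',
          Real.rpow_add_one hx.ne']
        ring
      rw [hfψ x hx, h1]
      ring
    rw [heq.deriv_eq]
    have hD2 := (hder (p + 2) u hu).const_mul (3 + α)
    have : p + 2 - 1 = p + 1 := by ring
    rw [this] at hD2
    have : p + 2 - 2 = p := by ring
    rw [this] at hD2
    exact hD2.deriv
  have hd2 : deriv (deriv (fun u => u ^ 2 * (3 + α) * f u)) v
      = (3 + α) * ((p + 2) * ((p + 1) * ψ p v + k * ψ (p - 1) v)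
          + k * (p * ψ (p - 1) v + k * ψ (p - 2) v)) := by
    have heq : deriv (fun u => u ^ 2 * (3 + α) * f u)
        =ᶠ[nhds v] (fun u => (3 + α) * ((p + 2) * ψ (p + 1) u + k * ψ p u)) := by
      filter_upwards [hmem] with u hu
      exact hφ u hu
    rw [heq.deriv_eq]
    have hD3 := (((hder (p + 1) v hv).const_mul (p + 2)).add
      ((hder p v hv).const_mul k)).const_mul (3 + α)
    have : p + 1 - 1 = p := by ring
    rw [this] at hD3
    have : p + 1 - 2 = p - 1 := by ring
    rw [this] at hD3
    exact hD3.deriv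
  rw [hd1, hd2]
  -- relate ψ p v, ψ (p-1) v, ψ (p-2) v
  have e1 : ψ (p - 1) v = v * ψ (p - 2) v := by
    rw [hψ]; simp only
    rw [show p - 1 = p - 2 + 1 by ring, Real.rpow_add_one hv.ne']
    ring
  have e0 : ψ p v = v * ψ (p - 1) v := by
    rw [hψ]; simp only
    rw [show p = p - 1 + 1 by ring, Real.rpow_add_one hv.ne']
    ring
  rw [e0, e1]
  have hBγD : B = γ * D := by
    rw [hγ]; field_simp
  exact stmt_13_key b12 α ζ Mbar ρbar B D γ k p (ψ (p - 2) v) v hα hρ.ne'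
    hDpos.ne' h1α.ne' hD hBγD hk hp
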